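/- Fix a ∈ ℝ with a ≠ 0 and c > 0, and for each λ ∈ (1,∞) let T_*(λ) = T_*(a,λ,c) be the shock time. If a > 0 then λ ↦ T_*(λ) is strictly decreasing on (1,∞); if a < 0 then λ ↦ T_*(λ) is strictly increasing on (1,∞). (As λ decreases the damping effect becomes stronger, which delays the shock for a > 0 and advances it for a < 0.) -/

import Mathlib

open Set intervalIntegral

/-- `B(t) = ∫₀ᵗ A(s)⁻¹ ds = ∫₀ᵗ exp((a/(λ−1))·((1+s)^(1−λ) − 1)) ds`. -/
noncomputable def dampB (a lam t : ℝ) : ℝ :=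
  ∫ s in (0:ℝ)..t, Real.exp (a / (lam - 1) * ((1 + s) ^ (1 - lam) - 1))

lemma slope_exp_lt {x y : ℝ} (hx : x ≠ 0) (hy : y ≠ 0) (hxy : x < y) :
    (Real.exp x - 1) / x < (Real.exp y - 1) / y := by
  have := strictConvexOn_exp.secant_strict_mono (a := 0) (Set.mem_univ 0)
    (Set.mem_univ x) (Set.mem_univ y) hx hy hxy
  simpa [Real.exp_zero] using this

/-- The key strict pointwise inequality. -/
lemma h_lt {lam₁ lam₂ s : ℝ} (h1 : 1 < lam₁) (hll : lam₁ < lam₂) (hs : 0 < s) :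
    ((1 + s) ^ (1 - lam₁) - 1) / (lam₁ - 1) < ((1 + s) ^ (1 - lam₂) - 1) / (lam₂ - 1) := by
  have h1s : (0:ℝ) < 1 + s := by linarith
  set L := Real.log (1 + s) with hLdef
  have hL : 0 < L := Real.log_pos (by linarith)
  have hu1 : (0:ℝ) < lam₁ - 1 := by linarith
  have hu2 : (0:ℝ) < lam₂ - 1 := by linarith
  set x₁ := L * (1 - lam₁) with hx1def
  set x₂ := L * (1 - lam₂) with hx2def
  have hx1 : x₁ < 0 := mul_neg_of_pos_of_neg hL (by linarith)
  have hx2 : x₂ < 0 := mul_neg_of_pos_of_neg hL (by linarith)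
  have hxx : x₂ < x₁ := by
    have : 1 - lam₂ < 1 - lam₁ := by linarith
    exact (mul_lt_mul_iff_right₀ hL).2 this
  have e1 : (1 + s) ^ (1 - lam₁) = Real.exp x₁ := by
    rw [Real.rpow_def_of_pos h1s]
  have e2 : (1 + s) ^ (1 - lam₂) = Real.exp x₂ := by
    rw [Real.rpow_def_of_pos h1s]
  rw [e1, e2]
  have key : (Real.exp x₂ - 1) / x₂ < (Real.exp x₁ - 1) / x₁ :=
    slope_exp_lt hx2.ne hx1.ne hxx
  have hne1 : L - L * lam₁ ≠ 0 := by nlinarith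
  have hne2 : L - L * lam₂ ≠ 0 := by nlinarith
  have r1 : (Real.exp x₁ - 1) / (lam₁ - 1) = -L * ((Real.exp x₁ - 1) / x₁) := by
    rw [hx1def]
    rw [show L * (1 - lam₁) = L - L * lam₁ by ring]
    field_simp
    have h' : (1 - lam₁) * (1 - lam₁)⁻¹ = 1 := mul_inv_cancel₀ (by linarith)
    linear_combination (1 - Real.exp (L * (1 - lam₁))) * h'
  have r2 : (Real.exp x₂ - 1) / (lam₂ - 1) = -L * ((Real.exp x₂ - 1) / x₂) := by
    rw [hx2def]
    rw [show L * (1 - lam₂) = L - L * lam₂ by ring]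
    field_simp
    have h' : (1 - lam₂) * (1 - lam₂)⁻¹ = 1 := mul_inv_cancel₀ (by linarith)
    linear_combination (1 - Real.exp (L * (1 - lam₂))) * h'
  rw [r1, r2]
  have hnegL : -L < 0 := by linarith
  exact (mul_lt_mul_left_of_neg hnegL).2 key

lemma cont_integrand (a lam : ℝ) :
    ContinuousOn (fun s => Real.exp (a / (lam - 1) * ((1 + s) ^ (1 - lam) - 1)))
      (Set.Ici (0:ℝ)) := by
  apply ContinuousOn.rexp
  apply ContinuousOn.mul continuousOn_const
  apply ContinuousOn.sub _ continuousOn_const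
  apply ContinuousOn.rpow_const
  · exact (continuous_const.add continuous_id).continuousOn
  · intro x hx
    left
    have : (0:ℝ) < 1 + x := by have : (0:ℝ) ≤ x := hx; linarith
    exact this.ne'

lemma integrable_integrand (a lam t₁ t₂ : ℝ) (h1 : 0 ≤ t₁) (h2 : 0 ≤ t₂) :
    IntervalIntegrable (fun s => Real.exp (a / (lam - 1) * ((1 + s) ^ (1 - lam) - 1)))
      MeasureTheory.volume t₁ t₂ := by
  apply ContinuousOn.intervalIntegrable
  apply (cont_integrand a lam).mono
  intro x hx
  rcases Set.mem_uIcc.1 hx with ⟨h, _⟩ | ⟨h, _⟩ <;> exact le_trans (by assumption) h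

/-- `dampB` is monotone in `t` on nonnegative times. -/
lemma dampB_mono (a lam : ℝ) {t₁ t₂ : ℝ} (h0 : 0 ≤ t₁) (h12 : t₁ ≤ t₂) :
    dampB a lam t₁ ≤ dampB a lam t₂ := by
  have h02 : 0 ≤ t₂ := le_trans h0 h12
  have hadd := intervalIntegral.integral_add_adjacent_intervals
    (integrable_integrand a lam 0 t₁ le_rfl h0) (integrable_integrand a lam t₁ t₂ h0 h02)
  have hnn : 0 ≤ ∫ s in t₁..t₂, Real.exp (a / (lam - 1) * ((1 + s) ^ (1 - lam) - 1)) :=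
    intervalIntegral.integral_nonneg h12 (fun x _ => (Real.exp_pos _).le)
  unfold dampB
  linarith [hadd]

/-- The strict comparison of `dampB` in `λ` for fixed `t > 0`, `a > 0`. -/
lemma dampB_lt_pos {a lam₁ lam₂ t : ℝ} (ha : 0 < a) (h1 : 1 < lam₁) (hll : lam₁ < lam₂)
    (ht : 0 < t) : dampB a lam₁ t < dampB a lam₂ t := by
  have hIcc : Set.Icc (0:ℝ) t ⊆ Set.Ici 0 := fun x hx => hx.1
  apply intervalIntegral.integral_lt_integral_of_continuousOn_of_le_of_exists_lt ht
    ((cont_integrand a lam₁).mono hIcc) ((cont_integrand a lam₂).mono hIcc)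
  · intro x hx
    apply Real.exp_le_exp.2
    have hkey := h_lt h1 hll hx.1
    have e1 : a / (lam₁ - 1) * ((1 + x) ^ (1 - lam₁) - 1)
        = a * (((1 + x) ^ (1 - lam₁) - 1) / (lam₁ - 1)) := by ring
    have e2 : a / (lam₂ - 1) * ((1 + x) ^ (1 - lam₂) - 1)
        = a * (((1 + x) ^ (1 - lam₂) - 1) / (lam₂ - 1)) := by ring
    rw [e1, e2]
    exact (mul_le_mul_iff_right₀ ha).2 hkey.le
  · refine ⟨t, ⟨ht.le, le_rfl⟩, ?_⟩
    apply Real.exp_lt_exp.2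
    have hkey := h_lt h1 hll ht
    have e1 : a / (lam₁ - 1) * ((1 + t) ^ (1 - lam₁) - 1)
        = a * (((1 + t) ^ (1 - lam₁) - 1) / (lam₁ - 1)) := by ring
    have e2 : a / (lam₂ - 1) * ((1 + t) ^ (1 - lam₂) - 1)
        = a * (((1 + t) ^ (1 - lam₂) - 1) / (lam₂ - 1)) := by ring
    rw [e1, e2]
    exact (mul_lt_mul_iff_right₀ ha).2 hkey

/-- The strict comparison of `dampB` in `λ` for fixed `t > 0`, `a < 0`. -/
lemma dampB_lt_neg {a lam₁ lam₂ t : ℝ} (ha : a < 0) (h1 : 1 < lam₁) (hll : lam₁ < lam₂)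
    (ht : 0 < t) : dampB a lam₂ t < dampB a lam₁ t := by
  have hIcc : Set.Icc (0:ℝ) t ⊆ Set.Ici 0 := fun x hx => hx.1
  apply intervalIntegral.integral_lt_integral_of_continuousOn_of_le_of_exists_lt ht
    ((cont_integrand a lam₂).mono hIcc) ((cont_integrand a lam₁).mono hIcc)
  · intro x hx
    apply Real.exp_le_exp.2
    have hkey := h_lt h1 hll hx.1
    have e1 : a / (lam₁ - 1) * ((1 + x) ^ (1 - lam₁) - 1)
        = a * (((1 + x) ^ (1 - lam₁) - 1) / (lam₁ - 1)) := by ring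
    have e2 : a / (lam₂ - 1) * ((1 + x) ^ (1 - lam₂) - 1)
        = a * (((1 + x) ^ (1 - lam₂) - 1) / (lam₂ - 1)) := by ring
    rw [e1, e2]
    exact (mul_le_mul_left_of_neg ha).2 hkey.le
  · refine ⟨t, ⟨ht.le, le_rfl⟩, ?_⟩
    apply Real.exp_lt_exp.2
    have hkey := h_lt h1 hll ht
    have e1 : a / (lam₁ - 1) * ((1 + t) ^ (1 - lam₁) - 1)
        = a * (((1 + t) ^ (1 - lam₁) - 1) / (lam₁ - 1)) := by ring
    have e2 : a / (lam₂ - 1) * ((1 + t) ^ (1 - lam₂) - 1)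
        = a * (((1 + t) ^ (1 - lam₂) - 1) / (lam₂ - 1)) := by ring
    rw [e1, e2]
    exact (mul_lt_mul_left_of_neg ha).2 hkey

/-- Monotonicity of the shock time `T_*(a,λ,c)` in the decay rate `λ`: for `a > 0` it is
strictly decreasing in `λ`, for `a < 0` it is strictly increasing in `λ`. -/
theorem stmt5 (a c : ℝ) (ha : a ≠ 0) (hc : 0 < c)
    (lam₁ lam₂ T₁ T₂ : ℝ) (hlam₁ : 1 < lam₁) (hlam₂ : 1 < lam₂) (hll : lam₁ < lam₂)
    (hT₁ : 0 < T₁) (hB₁ : dampB a lam₁ T₁ = 1 / c)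
    (hT₂ : 0 < T₂) (hB₂ : dampB a lam₂ T₂ = 1 / c) :
    (0 < a → T₂ < T₁) ∧ (a < 0 → T₁ < T₂) := by
  constructor
  · intro hap
    by_contra h
    push_neg at h
    have h1 : dampB a lam₁ T₁ < dampB a lam₂ T₁ := dampB_lt_pos hap hlam₁ hll hT₁
    have h2 : dampB a lam₂ T₁ ≤ dampB a lam₂ T₂ := dampB_mono a lam₂ hT₁.le h
    rw [hB₁, hB₂] at *
    linarith
  · intro han
    by_contra h
    push_neg at h
    have h1 : dampB a lam₂ T₂ < dampB a lam₁ T₂ := dampB_lt_neg han hlam₁ hll hT₂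
    have h2 : dampB a lam₁ T₂ ≤ dampB a lam₁ T₁ := dampB_mono a lam₁ hT₂.le h
    rw [hB₁, hB₂] at *
    linarith
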